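/- arXiv:0909.5147 — 7 statements merged into one kernel-verified Lean document; each statement's English description precedes it below -/
import Mathlib

section
/- Assume the group Γ is finitely generated. Then for every ℂ[Γ]-module W, every q ≥ 0 and every w ∈ H⁰_{q,P}(Γ,W), the cyclic submodule ℂ[Γ]·w is a finite-dimensional complex vector space. -/
/-- The augmentation homomorphism `ℂ[Γ] → ℂ`, sending `∑ c_γ γ` to `∑ c_γ`. -/
noncomputable def aug (Γ : Type*) [Group Γ] : MonoidAlgebra ℂ Γ →ₐ[ℂ] ℂ :=
  MonoidAlgebra.lift ℂ ℂ Γ 1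

/-- The augmentation ideal `I_Γ`, the kernel of the augmentation homomorphism. -/
noncomputable def augIdeal (Γ : Type*) [Group Γ] : Ideal (MonoidAlgebra ℂ Γ) :=
  RingHom.ker (aug Γ).toRingHom

/-- The space `H⁰_{q,P}(Γ,W) = {w ∈ W : J_{q+1} w = 0}` of invariants of type `P` and
order `q`. -/
def Hset (Γ : Type*) [Group Γ] (P : Subgroup Γ) (W : Type*) [AddCommGroup W]
    [Module (MonoidAlgebra ℂ Γ) W] (q : ℕ) : Set W :=
  {w | (∀ x : Fin (q + 1) → MonoidAlgebra ℂ Γ,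
          (∀ i, x i ∈ augIdeal Γ) → (List.ofFn x).prod • w = 0) ∧
        ∀ p : Γ, p ∈ P → (MonoidAlgebra.of ℂ Γ p) • w = w}

lemma aug_of_sub_one {Γ : Type*} [Group Γ] (γ : Γ) :
    MonoidAlgebra.of ℂ Γ γ - 1 ∈ augIdeal Γ := by
  simp [augIdeal, aug, RingHom.mem_ker, map_sub]

/-- If `Γ` is finitely generated, then for every `ℂ[Γ]`-module `W`, every `q ≥ 0` and
every `w ∈ H⁰_{q,P}(Γ,W)`, the cyclic submodule `ℂ[Γ]·w` is finite dimensional over `ℂ`. -/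
theorem stmt2 (Γ : Type*) [Group Γ] (P : Subgroup Γ) [P.Normal] (hΓ : Group.FG Γ)
    (W : Type*) [AddCommGroup W] [Module (MonoidAlgebra ℂ Γ) W]
    [Module ℂ W] [IsScalarTower ℂ (MonoidAlgebra ℂ Γ) W]
    (q : ℕ) (w : W) (hw : w ∈ Hset Γ P W q) :
    FiniteDimensional ℂ
      ((Submodule.span (MonoidAlgebra ℂ Γ) {w}).restrictScalars ℂ) := by
  classical
  haveI : SMulCommClass ℂ (MonoidAlgebra ℂ Γ) W := IsScalarTower.to_smulCommClass
  obtain ⟨S, hS⟩ := hΓ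
  set T : Finset Γ := S ∪ S.image (·⁻¹) with hT
  set f : Γ → MonoidAlgebra ℂ Γ := fun γ => MonoidAlgebra.of ℂ Γ γ - 1 with hfdef
  have hf : ∀ γ : Γ, f γ ∈ augIdeal Γ := fun γ => aug_of_sub_one γ
  set F : (Σ n : Fin (q + 1), (Fin (n : ℕ) → T)) → W :=
    fun x => (List.ofFn fun i => f ((x.2 i : T) : Γ)).prod • w with hF
  set V : Submodule ℂ W := Submodule.span ℂ (Set.range F) with hV
  haveI hVfd : FiniteDimensional ℂ V :=
    FiniteDimensional.span_of_finite ℂ (Set.finite_range F)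
  have hwV : w ∈ V := by
    have : F ⟨⟨0, by omega⟩, Fin.elim0⟩ = w := by simp [hF]
    exact this ▸ Submodule.subset_span ⟨_, rfl⟩
  -- Claim A : V is stable under the action of generators
  have hA : ∀ g ∈ T, ∀ v ∈ V, MonoidAlgebra.of ℂ Γ g • v ∈ V := by
    intro g hg v hv
    induction hv using Submodule.span_induction with
    | mem v hv =>
        obtain ⟨⟨⟨n, hn⟩, c⟩, rfl⟩ := hv
        set Pr : MonoidAlgebra ℂ Γ := (List.ofFn fun i => f ((c i : T) : Γ)).prod with hPr
        have hFc : F ⟨⟨n, hn⟩, c⟩ = Pr • w := rfl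
        have expand : MonoidAlgebra.of ℂ Γ g • F ⟨⟨n, hn⟩, c⟩
            = (f g * Pr) • w + Pr • w := by
          rw [hFc, smul_smul, ← add_smul]
          congr 1
          rw [hfdef]
          rw [sub_mul, one_mul, sub_add_cancel]
        rw [expand]
        rcases eq_or_lt_of_le (Nat.lt_succ_iff.mp hn) with h | h
        · -- n = q : the first term vanishes
          subst h
          have hzero : (f g * Pr) • w = 0 := by
            have := hw.1 (Fin.cons (f g) (fun i => f ((c i : T) : Γ)))
              (by
                intro i
                refine Fin.cases ?_ ?_ i
                · simpa using hf g
                · intro j; simpa using hf ((c j : T) : Γ))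
            rwa [List.ofFn_succ, List.prod_cons, Fin.cons_zero] at this
          rw [hzero, zero_add]
          exact Submodule.subset_span ⟨⟨⟨n, hn⟩, c⟩, rfl⟩
        · -- n < q : the first term is again a generator
          refine Submodule.add_mem _ ?_ (Submodule.subset_span ⟨⟨⟨n, hn⟩, c⟩, rfl⟩)
          have : F ⟨⟨n + 1, by omega⟩, Fin.cons ⟨g, hg⟩ c⟩ = (f g * Pr) • w := by
            rw [hF]
            simp only [List.ofFn_succ, Fin.cons_zero, Fin.cons_succ, List.prod_cons]
            rfl
          exact this ▸ Submodule.subset_span ⟨_, rfl⟩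
    | zero => simp
    | add x y hx hy ihx ihy => rw [smul_add]; exact Submodule.add_mem _ ihx ihy
    | smul a x hx ih => rw [smul_comm]; exact Submodule.smul_mem _ _ ih
  -- Claim B : V is stable under the action of every group element
  have hB : ∀ γ : Γ, ∀ v ∈ V, MonoidAlgebra.of ℂ Γ γ • v ∈ V := by
    have hγ : ∀ γ : Γ, γ ∈ Submonoid.closure ((S : Set Γ) ∪ (S : Set Γ)⁻¹) := by
      intro γ
      have h1 := Subgroup.closure_toSubmonoid (S : Set Γ)
      rw [hS] at h1
      have : γ ∈ (⊤ : Subgroup Γ).toSubmonoid := trivial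
      rwa [h1] at this
    intro γ
    refine Submonoid.closure_induction ?_ ?_ ?_ (hγ γ)
    · intro x hx
      refine hA x ?_
      rcases hx with hx | hx
      · exact Finset.mem_union_left _ hx
      · refine Finset.mem_union_right _ ?_
        simp only [Finset.mem_image]
        exact ⟨x⁻¹, Set.mem_inv.mp hx, inv_inv x⟩
    · intro v hv
      rw [map_one, one_smul]; exact hv
    · intro x y _ _ ihx ihy v hv
      rw [map_mul, mul_smul]
      exact ihx _ (ihy _ hv)
  -- every element of ℂ[Γ] maps w into V
  have hmain : ∀ x : MonoidAlgebra ℂ Γ, x • w ∈ V := by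
    intro x
    induction x using MonoidAlgebra.induction_on with
    | of g => exact hB g w hwV
    | add x y ihx ihy => rw [add_smul]; exact Submodule.add_mem _ ihx ihy
    | smul r x ih => rw [smul_assoc]; exact Submodule.smul_mem _ _ ih
  have hle : (Submodule.span (MonoidAlgebra ℂ Γ) {w}).restrictScalars ℂ ≤ V := by
    intro v hv
    rw [Submodule.restrictScalars_mem, Submodule.mem_span_singleton] at hv
    obtain ⟨a, rfl⟩ := hv
    exact hmain a
  exact Submodule.finiteDimensional_of_le hle
end

section
/- Let W be a ℂ[Γ]-module, q ≥ 1 and w ∈ H⁰_{q,P}(Γ,W). Then the order lowering map Λ(w): Γ → H⁰_{q−1,P}(Γ,W)/H⁰_{q−2,P}(Γ,W), defined by γ ↦ (γ−1)·w modulo H⁰_{q−2,P}(Γ,W), is a group homomorphism which vanishes on P; moreover Λ(w) is the zero homomorphism if and only if w ∈ H⁰_{q−1,P}(Γ,W). -/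
section Aux
variable {Γ : Type*} [Group Γ]

lemma aug_of (γ : Γ) : aug Γ (MonoidAlgebra.of ℂ Γ γ) = 1 := by
  simp [aug, MonoidAlgebra.lift_single]

lemma of_sub_one_mem (γ : Γ) : MonoidAlgebra.of ℂ Γ γ - 1 ∈ augIdeal Γ := by
  simp [augIdeal, RingHom.mem_ker, map_sub, aug, MonoidAlgebra.lift_single]

lemma mem_span_of_aug (x : MonoidAlgebra ℂ Γ) (hx : x ∈ augIdeal Γ) :
    x ∈ Submodule.span ℂ (Set.range fun γ : Γ => MonoidAlgebra.of ℂ Γ γ - 1) := by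
  have hx' : (∑ a ∈ x.coeff.support, x.coeff a) = 0 := by
    simpa [augIdeal, RingHom.mem_ker, aug, MonoidAlgebra.lift_apply, Finsupp.sum] using hx
  have hrep : x = ∑ a ∈ x.coeff.support, x.coeff a • (MonoidAlgebra.of ℂ Γ a - 1) := by
    have h1 : ∑ a ∈ x.coeff.support, x.coeff a • (MonoidAlgebra.of ℂ Γ a) = x := by
      conv_rhs => rw [← MonoidAlgebra.sum_coeff_single x]
      rw [Finsupp.sum]
      refine Finset.sum_congr rfl fun a _ => ?_
      rw [MonoidAlgebra.of_apply, MonoidAlgebra.smul_single', mul_one]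
    calc x = ∑ a ∈ x.coeff.support, x.coeff a • (MonoidAlgebra.of ℂ Γ a)
            - (∑ a ∈ x.coeff.support, x.coeff a) • (1 : MonoidAlgebra ℂ Γ) := by
            rw [h1, hx', zero_smul, sub_zero]
      _ = ∑ a ∈ x.coeff.support, x.coeff a • (MonoidAlgebra.of ℂ Γ a - 1) := by
            rw [Finset.sum_smul, ← Finset.sum_sub_distrib]
            exact Finset.sum_congr rfl fun a _ => (smul_sub _ _ _).symm
  rw [hrep]
  exact Submodule.sum_mem _ fun a _ =>
    Submodule.smul_mem _ _ (Submodule.subset_span ⟨a, rfl⟩)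

lemma ofFn_snoc_prod {M : Type*} [Monoid M] {n : ℕ} (x : Fin n → M) (y : M) :
    (List.ofFn (Fin.snoc x y)).prod = (List.ofFn x).prod * y := by
  rw [List.ofFn_succ']
  simp

variable {W : Type*} [AddCommGroup W] [Module (MonoidAlgebra ℂ Γ) W]

lemma mul_mem_smul_eq_zero (r : MonoidAlgebra ℂ Γ) (x : MonoidAlgebra ℂ Γ)
    (hx : x ∈ augIdeal Γ) (v : W)
    (h : ∀ γ : Γ, (r * (MonoidAlgebra.of ℂ Γ γ - 1)) • v = 0) : (r * x) • v = 0 := by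
  refine Submodule.span_induction ?_ ?_ ?_ ?_ (mem_span_of_aug x hx)
  · rintro y ⟨γ, rfl⟩; exact h γ
  · simp
  · intro y z _ _ hy hz; rw [mul_add, add_smul, hy, hz, add_zero]
  · intro c y _ hy
    rw [mul_smul_comm, Algebra.smul_def, mul_smul, hy, smul_zero]

lemma kill_snoc {m : ℕ} {w : W}
    (hK : ∀ x : Fin (m + 1 + 1) → MonoidAlgebra ℂ Γ,
      (∀ i, x i ∈ augIdeal Γ) → (List.ofFn x).prod • w = 0)
    (y : MonoidAlgebra ℂ Γ) (hy : y ∈ augIdeal Γ) :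
    ∀ x : Fin (m + 1) → MonoidAlgebra ℂ Γ,
      (∀ i, x i ∈ augIdeal Γ) → (List.ofFn x).prod • (y • w) = 0 := by
  intro x hx
  rw [← mul_smul, ← ofFn_snoc_prod]
  apply hK (Fin.snoc x y)
  intro i
  refine Fin.lastCases ?_ ?_ i
  · simpa using hy
  · intro j; simpa using hx j

lemma pinv_step {P : Subgroup Γ} [P.Normal] (v : W)
    (hv : ∀ p ∈ P, MonoidAlgebra.of ℂ Γ p • v = v) (γ : Γ) :
    ∀ p ∈ P, MonoidAlgebra.of ℂ Γ p • ((MonoidAlgebra.of ℂ Γ γ - 1) • v)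
      = (MonoidAlgebra.of ℂ Γ γ - 1) • v := by
  intro p hp
  have h1 : MonoidAlgebra.of ℂ Γ p • (MonoidAlgebra.of ℂ Γ γ • v)
      = MonoidAlgebra.of ℂ Γ γ • v := by
    rw [← mul_smul, ← map_mul]
    have hc : γ⁻¹ * p * γ ∈ P := by
      simpa using ‹P.Normal›.conj_mem p hp γ⁻¹
    have hpg : p * γ = γ * (γ⁻¹ * p * γ) := by group
    rw [hpg, map_mul, mul_smul, hv _ hc]
  rw [sub_smul, one_smul, smul_sub, h1, hv p hp]

end Aux

/-- `H⁰_{q,P}(Γ,W)` for an integer index `q`, with the convention that it is `0`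
for `q < 0`. -/
def Hz (Γ : Type*) [Group Γ] (P : Subgroup Γ) (W : Type*) [AddCommGroup W]
    [Module (MonoidAlgebra ℂ Γ) W] (q : ℤ) : Set W :=
  if 0 ≤ q then Hset Γ P W q.toNat else {0}

/-- For `q ≥ 1` and `w ∈ H⁰_{q,P}(Γ,W)`, the order lowering map
`Λ(w) : γ ↦ (γ-1)·w mod H⁰_{q-2,P}` is a group homomorphism into
`H⁰_{q-1,P}/H⁰_{q-2,P}` (i.e. `Λ(w)(γτ) ≡ Λ(w)(γ) + Λ(w)(τ) mod H⁰_{q-2,P}`)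
which vanishes on `P`, and `Λ(w)` is the zero homomorphism if and only if
`w ∈ H⁰_{q-1,P}(Γ,W)`. -/
theorem stmt3 (Γ : Type*) [Group Γ] (P : Subgroup Γ) [P.Normal]
    (W : Type*) [AddCommGroup W] [Module (MonoidAlgebra ℂ Γ) W]
    (q : ℤ) (hq : 1 ≤ q) (w : W) (hw : w ∈ Hz Γ P W q) :
    (∀ γ τ : Γ,
      (MonoidAlgebra.of ℂ Γ (γ * τ) - 1) • w
        - (MonoidAlgebra.of ℂ Γ γ - 1) • w - (MonoidAlgebra.of ℂ Γ τ - 1) • w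
        ∈ Hz Γ P W (q - 2)) ∧
    (∀ γ : Γ, (MonoidAlgebra.of ℂ Γ γ - 1) • w ∈ Hz Γ P W (q - 1)) ∧
    (∀ p ∈ P, (MonoidAlgebra.of ℂ Γ p - 1) • w ∈ Hz Γ P W (q - 2)) ∧
    ((∀ γ : Γ, (MonoidAlgebra.of ℂ Γ γ - 1) • w ∈ Hz Γ P W (q - 2)) ↔
      w ∈ Hz Γ P W (q - 1)) := by
  set e := MonoidAlgebra.of ℂ Γ with he
  obtain ⟨n, rfl⟩ : ∃ n : ℕ, q = (n : ℤ) + 1 := ⟨(q - 1).toNat, by omega⟩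
  have hq1 : ((n : ℤ) + 1 - 1) = (n : ℤ) := by ring
  have hw' : w ∈ Hset Γ P W (n + 1) := by
    have h0 : (0 : ℤ) ≤ (n : ℤ) + 1 := by positivity
    rw [Hz, if_pos h0] at hw
    simpa [show ((n : ℤ) + 1).toNat = n + 1 by omega] using hw
  have hHzn : Hz Γ P W ((n : ℤ) + 1 - 1) = Hset Γ P W n := by
    rw [hq1, Hz, if_pos (by positivity)]
    norm_num
  -- key algebraic identity
  have key : ∀ γ τ : Γ, (e (γ * τ) - 1) • w - (e γ - 1) • w - (e τ - 1) • w
      = (e γ - 1) • ((e τ - 1) • w) := by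
    intro γ τ
    rw [← mul_smul, ← sub_smul, ← sub_smul]
    congr 1
    rw [he, map_mul]
    noncomm_ring
  refine ⟨?_, ?_, ?_, ?_⟩
  · -- homomorphism property
    intro γ τ
    rw [key]
    rcases n with _ | m
    · -- q = 1 : target is {0}
      rw [show (((0:ℕ):ℤ) + 1 - 2) = (-1 : ℤ) by norm_num, Hz, if_neg (by omega)]
      have h2 := hw'.1 ![e γ - 1, e τ - 1] (by
        intro i; fin_cases i <;> simpa [he] using of_sub_one_mem _)
      rw [← mul_smul]
      simpa using h2
    · rw [show (((m+1:ℕ):ℤ) + 1 - 2) = ((m:ℕ) : ℤ) by push_cast; ring, Hz,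
        if_pos (by positivity), Int.toNat_natCast]
      refine ⟨kill_snoc (kill_snoc hw'.1 _ (of_sub_one_mem τ)) _ (of_sub_one_mem γ),
        pinv_step _ (pinv_step _ hw'.2 τ) γ⟩
  · -- lands in Hz (q-1)
    intro γ
    rw [hHzn]
    exact ⟨kill_snoc hw'.1 _ (of_sub_one_mem γ), pinv_step _ hw'.2 γ⟩
  · -- vanishes on P
    intro p hp
    have hzero : (e p - 1) • w = 0 := by
      rw [sub_smul, one_smul, hw'.2 p hp, sub_self]
    rw [hzero]
    rcases n with _ | m
    · rw [show (((0:ℕ):ℤ) + 1 - 2) = (-1 : ℤ) by norm_num, Hz, if_neg (by omega)]; rfl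
    · rw [show (((m+1:ℕ):ℤ) + 1 - 2) = ((m:ℕ) : ℤ) by push_cast; ring, Hz,
        if_pos (by positivity), Int.toNat_natCast]
      exact ⟨fun x _ => smul_zero _, fun p _ => smul_zero _⟩
  · -- iff
    constructor
    · intro h
      rw [hHzn]
      refine ⟨?_, hw'.2⟩
      intro x hx
      have hdecomp : (List.ofFn x).prod
          = (List.ofFn fun i : Fin n => x i.castSucc).prod * x (Fin.last n) := by
        rw [List.ofFn_succ']
        simp
      rw [hdecomp]
      refine mul_mem_smul_eq_zero _ _ (hx _) w fun γ => ?_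
      rw [mul_smul]
      rcases n with _ | m
      · have h0 := h γ
        rw [show (((0:ℕ):ℤ) + 1 - 2) = (-1 : ℤ) by norm_num, Hz, if_neg (by omega)] at h0
        simp only [Set.mem_singleton_iff] at h0
        rw [h0, smul_zero]
      · have h0 := h γ
        rw [show (((m+1:ℕ):ℤ) + 1 - 2) = ((m:ℕ) : ℤ) by push_cast; ring, Hz,
          if_pos (by positivity), Int.toNat_natCast] at h0
        have := h0.1 (fun i : Fin (m + 1) => x i.castSucc) (fun i => hx _)
        simpa [he] using this
    · intro h γ
      rw [hHzn] at h
      rcases n with _ | m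
      · rw [show (((0:ℕ):ℤ) + 1 - 2) = (-1 : ℤ) by norm_num, Hz, if_neg (by omega)]
        have h0 := h.1 ![e γ - 1] (by intro i; fin_cases i <;> simpa [he] using of_sub_one_mem _)
        simpa using h0
      · rw [show (((m+1:ℕ):ℤ) + 1 - 2) = ((m:ℕ) : ℤ) by push_cast; ring, Hz,
          if_pos (by positivity), Int.toNat_natCast]
        exact ⟨kill_snoc h.1 _ (of_sub_one_mem γ), pinv_step _ h.2 γ⟩
end

section
/- Let a group Γ act on a set X, let D ⊆ X satisfy Γ·D = X, and let S ⊆ Γ be a symmetric set of generators of Γ (s ∈ S implies s^{−1} ∈ S) containing the identity element. Let q ≥ 0 and let f: X → ℂ be a function such that ((γ_0−1)(γ_1−1)⋯(γ_q−1)·f) = 0 for all γ_0,…,γ_q ∈ Γ, where Γ acts on functions by (γ·f)(x) = f(γ^{−1}·x) and this action is extended linearly to ℂ[Γ]. If f vanishes on S^q·D = {s_1⋯s_q·d : s_1,…,s_q ∈ S, d ∈ D}, then f = 0 on all of X. -/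
/-- The action of `(γ - 1) ∈ ℂ[Γ]` on complex-valued functions on `X`,
where `(γ·f)(x) = f(γ⁻¹·x)`. -/
def diffAct {Γ X : Type*} [Group Γ] [MulAction Γ X] (γ : Γ) (f : X → ℂ) : X → ℂ :=
  fun x => f (γ⁻¹ • x) - f x

theorem aux5 {Γ X : Type*} [Group Γ] [MulAction Γ X]
    (D : Set X) (hD : ∀ x : X, ∃ γ : Γ, ∃ d ∈ D, x = γ • d)
    (S : Set Γ) (hSsym : ∀ s ∈ S, s⁻¹ ∈ S) (hSone : (1 : Γ) ∈ S)
    (hSgen : Subgroup.closure S = ⊤) :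
    ∀ q : ℕ, ∀ f : X → ℂ,
      (∀ g : Fin (q + 1) → Γ, (List.ofFn g).foldr diffAct f = 0) →
      (∀ s : Fin q → Γ, (∀ i, s i ∈ S) → ∀ d ∈ D,
        f ((List.ofFn s).prod • d) = 0) →
      ∀ x : X, f x = 0 := by
  intro q
  induction q with
  | zero =>
    intro f hf hvan x
    obtain ⟨γ, d, hd, rfl⟩ := hD x
    have h1 : diffAct γ⁻¹ f = 0 := by simpa using hf (fun _ => γ⁻¹)
    have h2 : f (γ • d) = f d := by
      have := congrFun h1 d
      simp only [diffAct, inv_inv, Pi.zero_apply] at this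
      exact sub_eq_zero.mp this
    have h3 : f d = 0 := by simpa using hvan (fun i => (1 : Γ)) (fun i => i.elim0) d hd
    rw [h2, h3]
  | succ q ih =>
    intro f hf hvan
    -- for every s ∈ S, diffAct s f = 0
    have key : ∀ s ∈ S, ∀ x : X, diffAct s f x = 0 := by
      intro s hs
      apply ih (diffAct s f)
      · intro g
        have := hf (Fin.snoc g s)
        rw [List.ofFn_succ'] at this
        simp only [Fin.snoc_castSucc, Fin.snoc_last, List.concat_eq_append,
          List.foldr_append, List.foldr_cons, List.foldr_nil] at this
        exact this
      · intro s' hs' d hd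
        simp only [diffAct]
        have hA : f (s⁻¹ • (List.ofFn s').prod • d) = 0 := by
          have := hvan (Fin.cons s⁻¹ s') (by
            intro i
            refine Fin.cases ?_ ?_ i
            · simpa using hSsym s hs
            · intro j; simpa using hs' j) d hd
          rw [List.ofFn_succ] at this
          simpa [mul_smul] using this
        have hB : f ((List.ofFn s').prod • d) = 0 := by
          have := hvan (Fin.cons 1 s') (by
            intro i
            refine Fin.cases ?_ ?_ i
            · simpa using hSone
            · intro j; simpa using hs' j) d hd
          rw [List.ofFn_succ] at this
          simpa [mul_smul] using this
        rw [hA, hB, sub_zero]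
    -- f is Γ-invariant
    have hinv : ∀ γ : Γ, ∀ x : X, f (γ • x) = f x := by
      intro γ
      have hγ : γ ∈ Subgroup.closure S := by rw [hSgen]; trivial
      induction hγ using Subgroup.closure_induction with
      | mem s hs =>
        intro x
        have := key s⁻¹ (hSsym s hs) x
        simp only [diffAct, inv_inv] at this
        exact sub_eq_zero.mp this
      | one => simp
      | mul a b _ _ ha hb => intro x; rw [mul_smul, ha, hb]
      | inv a _ ha =>
        intro x
        have := ha (a⁻¹ • x)
        simpa using this.symm
    intro x
    obtain ⟨γ, d, hd, rfl⟩ := hD x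
    rw [hinv]
    have := hvan (fun _ => (1 : Γ)) (fun _ => hSone) d hd
    simpa using this

/-- If `f` is a higher order invariant of order `q` (all products
`(γ₀-1)⋯(γ_q-1)` annihilate `f`) and `f` vanishes on `S^q·D`, where `S` is a
symmetric generating set containing `1` and `Γ·D = X`, then `f = 0`. -/
theorem stmt5 {Γ X : Type*} [Group Γ] [MulAction Γ X]
    (D : Set X) (hD : ∀ x : X, ∃ γ : Γ, ∃ d ∈ D, x = γ • d)
    (S : Set Γ) (hSsym : ∀ s ∈ S, s⁻¹ ∈ S) (hSone : (1 : Γ) ∈ S)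
    (hSgen : Subgroup.closure S = ⊤)
    (q : ℕ) (f : X → ℂ)
    (hf : ∀ g : Fin (q + 1) → Γ, (List.ofFn g).foldr diffAct f = 0)
    (hvan : ∀ s : Fin q → Γ, (∀ i, s i ∈ S) → ∀ d ∈ D,
      f ((List.ofFn s).prod • d) = 0) :
    ∀ x : X, f x = 0 :=
  aux5 D hD S hSsym hSone hSgen q f hf hvan
end

section
/- Let a countable group Γ act on a measure space (X,μ) by measurable measure-preserving bijections, let D ⊆ X be a measurable subset with Γ·D = X, and let S ⊆ Γ be a finite symmetric set of generators of Γ containing the identity element. Let q ≥ 0 and let f: X → ℂ be measurable such that for all γ_0,…,γ_q ∈ Γ one has ((γ_0−1)(γ_1−1)⋯(γ_q−1)·f) = 0 almost everywhere, where Γ acts on functions by (γ·f)(x) = f(γ^{−1}·x). If ∫_{S^q·D} |f|² dμ < ∞, then ∫_{S^{q+j}·D} |f|² dμ < ∞ for every integer j ≥ 0. -/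
open MeasureTheory Pointwise

/-- The set `S^k·D` of all `s₁⋯s_k·d` with `sᵢ ∈ S`, `d ∈ D`. -/
def SpowD {Γ X : Type*} [Group Γ] [MulAction Γ X] (S : Finset Γ) (k : ℕ)
    (D : Set X) : Set X :=
  {x | ∃ s : Fin k → Γ, (∀ i, s i ∈ S) ∧ ∃ d ∈ D, x = (List.ofFn s).prod • d}

section Aux

variable {Γ X : Type*} [Group Γ] [MulAction Γ X]

lemma spowD_succ (S : Finset Γ) (k : ℕ) (D : Set X) :
    SpowD S (k + 1) D = ⋃ s ∈ S, s • SpowD S k D := by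
  ext x
  simp only [SpowD, Set.mem_setOf_eq, Set.mem_iUnion, Set.mem_smul_set]
  constructor
  · rintro ⟨s, hs, d, hd, rfl⟩
    refine ⟨s 0, hs 0, (List.ofFn (fun i => s i.succ)).prod • d,
      ⟨fun i => s i.succ, fun i => hs _, d, hd, rfl⟩, ?_⟩
    rw [List.ofFn_succ, List.prod_cons, mul_smul]
  · rintro ⟨a, ha, y, ⟨s, hs, d, hd, rfl⟩, rfl⟩
    refine ⟨Fin.cons a s, ?_, d, hd, ?_⟩
    · intro i
      refine Fin.cases ?_ ?_ i <;> simp [ha, hs]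
    · simp [List.ofFn_succ, List.prod_cons, mul_smul]

lemma smul_spowD_subset (S : Finset Γ) (k : ℕ) (D : Set X) {s : Γ} (hs : s ∈ S) :
    s • SpowD S k D ⊆ SpowD S (k + 1) D := by
  rw [spowD_succ]
  intro x hx
  exact Set.mem_biUnion hs hx

lemma spowD_mono (S : Finset Γ) (k : ℕ) (D : Set X) (hSone : (1 : Γ) ∈ S) :
    SpowD S k D ⊆ SpowD S (k + 1) D := by
  intro x hx
  have : x ∈ (1 : Γ) • SpowD S k D := by simpa using hx
  exact smul_spowD_subset S k D hSone this

variable [MeasurableSpace X]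

lemma smul_measurableSet (hact : ∀ γ : Γ, Measurable (fun x : X => γ • x))
    {D : Set X} (hDmeas : MeasurableSet D) (γ : Γ) : MeasurableSet (γ • D) := by
  have : γ • D = (fun x : X => γ⁻¹ • x) ⁻¹' D := by
    rw [Set.preimage_smul, inv_inv]
  rw [this]
  exact (hact γ⁻¹) hDmeas

lemma spowD_measurableSet [Countable Γ] (hact : ∀ γ : Γ, Measurable (fun x : X => γ • x))
    (S : Finset Γ) (k : ℕ) {D : Set X} (hDmeas : MeasurableSet D) :
    MeasurableSet (SpowD S k D) := by
  have : SpowD S k D =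
      ⋃ (s : Fin k → Γ) (_ : ∀ i, s i ∈ S), (List.ofFn s).prod • D := by
    ext x
    simp only [SpowD, Set.mem_setOf_eq, Set.mem_iUnion, Set.mem_smul_set]
    constructor
    · rintro ⟨s, hs, d, hd, rfl⟩
      exact ⟨s, hs, d, hd, rfl⟩
    · rintro ⟨s, hs, d, hd, rfl⟩
      exact ⟨s, hs, d, hd, rfl⟩
  rw [this]
  exact MeasurableSet.iUnion fun s => MeasurableSet.iUnion fun _ =>
    smul_measurableSet hact hDmeas _

/-- Translation of a set lintegral by a measure-preserving group action. -/
lemma lintegral_smul_set {μ : Measure X}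
    (hact : ∀ γ : Γ, MeasurePreserving (fun x : X => γ • x) μ μ)
    (γ : Γ) {E : Set X} (hE : MeasurableSet E) {g : X → ENNReal} (hg : Measurable g) :
    ∫⁻ x in γ • E, g x ∂μ = ∫⁻ x in E, g (γ • x) ∂μ := by
  have h1 : γ • E = (fun x : X => γ⁻¹ • x) ⁻¹' E := by
    rw [Set.preimage_smul, inv_inv]
  have hg' : Measurable fun y : X => g (γ • y) := hg.comp (hact γ).measurable
  calc ∫⁻ x in γ • E, g x ∂μ
      = ∫⁻ x in (fun x : X => γ⁻¹ • x) ⁻¹' E, (fun y => g (γ • y)) (γ⁻¹ • x) ∂μ := by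
        rw [h1]; refine lintegral_congr fun x => ?_; simp [smul_inv_smul]
    _ = ∫⁻ x in E, g (γ • x) ∂μ :=
        (hact γ⁻¹).setLIntegral_comp_preimage hE hg'

lemma four_sq_le (a b : ENNReal) : (a + b) ^ 2 ≤ 4 * (a ^ 2 + b ^ 2) := by
  have h1 : a + b ≤ 2 * max a b := by
    rw [two_mul]; exact add_le_add (le_max_left a b) (le_max_right a b)
  have h2 : (max a b) ^ 2 ≤ a ^ 2 + b ^ 2 := by
    rcases le_total a b with h | h
    · rw [max_eq_right h]; exact le_add_self
    · rw [max_eq_left h]; exact le_self_add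
  calc (a + b) ^ 2 ≤ (2 * max a b) ^ 2 := by gcongr
    _ = 4 * (max a b) ^ 2 := by ring
    _ ≤ 4 * (a ^ 2 + b ^ 2) := by gcongr

lemma nnnorm_add_sq_le (a b : ℂ) :
    (‖a + b‖₊ : ENNReal) ^ 2 ≤ 4 * ((‖a‖₊ : ENNReal) ^ 2 + (‖b‖₊ : ENNReal) ^ 2) := by
  calc (‖a + b‖₊ : ENNReal) ^ 2
      ≤ ((‖a‖₊ : ENNReal) + (‖b‖₊ : ENNReal)) ^ 2 := by
        gcongr
        exact_mod_cast nnnorm_add_le a b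
    _ ≤ 4 * ((‖a‖₊ : ENNReal) ^ 2 + (‖b‖₊ : ENNReal) ^ 2) := four_sq_le _ _

end Aux

section Main

variable {Γ X : Type*} [Group Γ] [Countable Γ] [MulAction Γ X] [MeasurableSpace X]
  {μ : Measure X}

/-- The inductive step: finiteness on `S^{k+1}·D` provided finiteness of `f` and
of all `(s⁻¹-1)f`, `s ∈ S`, on `S^k·D`. -/
lemma step (hact : ∀ γ : Γ, MeasurePreserving (fun x : X => γ • x) μ μ)
    {D : Set X} (hDmeas : MeasurableSet D) (S : Finset Γ) (k : ℕ)
    {f : X → ℂ} (hfmeas : Measurable f)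
    (hbf : ∫⁻ x in SpowD S k D, (‖f x‖₊ : ENNReal) ^ 2 ∂μ < ⊤)
    (hbh : ∀ s ∈ S, ∫⁻ x in SpowD S k D, (‖diffAct s⁻¹ f x‖₊ : ENNReal) ^ 2 ∂μ < ⊤) :
    ∫⁻ x in SpowD S (k + 1) D, (‖f x‖₊ : ENNReal) ^ 2 ∂μ < ⊤ := by
  have hactm : ∀ γ : Γ, Measurable (fun x : X => γ • x) := fun γ => (hact γ).measurable
  have hE : MeasurableSet (SpowD S k D) := spowD_measurableSet hactm S k hDmeas
  have hg : Measurable fun x => (‖f x‖₊ : ENNReal) ^ 2 :=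
    hfmeas.nnnorm.coe_nnreal_ennreal.pow_const 2
  have hU : ⋃ s ∈ S, s • SpowD S k D = ⋃ s : {a // a ∈ S}, (s : Γ) • SpowD S k D := by
    ext x; simp
  rw [spowD_succ, hU]
  refine lt_of_le_of_lt (lintegral_iUnion_le _ _) ?_
  rw [tsum_fintype]
  refine ENNReal.sum_lt_top.2 fun s _ => ?_
  obtain ⟨s, hs⟩ := s
  have htr : ∫⁻ x in s • SpowD S k D, (‖f x‖₊ : ENNReal) ^ 2 ∂μ
      = ∫⁻ x in SpowD S k D, (‖f (s • x)‖₊ : ENNReal) ^ 2 ∂μ :=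
    lintegral_smul_set hact s hE hg
  have hpt : ∀ x, (‖f (s • x)‖₊ : ENNReal) ^ 2
      ≤ 4 * ((‖diffAct s⁻¹ f x‖₊ : ENNReal) ^ 2 + (‖f x‖₊ : ENNReal) ^ 2) := by
    intro x
    have : f (s • x) = diffAct s⁻¹ f x + f x := by
      simp [diffAct]
    rw [this]
    exact nnnorm_add_sq_le _ _
  have hhm : Measurable (diffAct s⁻¹ f) := by
    have : diffAct s⁻¹ f = fun x => f (s • x) - f x := by
      funext x; simp [diffAct]
    rw [this]
    exact (hfmeas.comp (hactm s)).sub hfmeas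
  calc ∫⁻ x in s • SpowD S k D, (‖f x‖₊ : ENNReal) ^ 2 ∂μ
      = ∫⁻ x in SpowD S k D, (‖f (s • x)‖₊ : ENNReal) ^ 2 ∂μ := htr
    _ ≤ ∫⁻ x in SpowD S k D,
          4 * ((‖diffAct s⁻¹ f x‖₊ : ENNReal) ^ 2 + (‖f x‖₊ : ENNReal) ^ 2) ∂μ :=
        lintegral_mono fun x => hpt x
    _ = 4 * (∫⁻ x in SpowD S k D, (‖diffAct s⁻¹ f x‖₊ : ENNReal) ^ 2 ∂μ
          + ∫⁻ x in SpowD S k D, (‖f x‖₊ : ENNReal) ^ 2 ∂μ) := by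
        rw [lintegral_const_mul _ (show Measurable fun x => (‖diffAct s⁻¹ f x‖₊ : ENNReal) ^ 2 + (‖f x‖₊ : ENNReal) ^ 2 from (hhm.nnnorm.coe_nnreal_ennreal.pow_const 2).add hg),
          lintegral_add_left (hhm.nnnorm.coe_nnreal_ennreal.pow_const 2)]
    _ < ⊤ := by
        refine ENNReal.mul_lt_top (by norm_num) ?_
        exact ENNReal.add_lt_top.2 ⟨hbh s hs, hbf⟩

/-- Main induction on the order `q`. -/
lemma key (hact : ∀ γ : Γ, MeasurePreserving (fun x : X => γ • x) μ μ)
    {D : Set X} (hDmeas : MeasurableSet D)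
    (S : Finset Γ) (hSone : (1 : Γ) ∈ S) :
    ∀ q : ℕ, ∀ f : X → ℂ, Measurable f →
      (∀ g : Fin (q + 1) → Γ, (List.ofFn g).foldr diffAct f =ᵐ[μ] 0) →
      (∫⁻ x in SpowD S q D, (‖f x‖₊ : ENNReal) ^ 2 ∂μ < ⊤) →
      ∀ k : ℕ, q ≤ k → ∫⁻ x in SpowD S k D, (‖f x‖₊ : ENNReal) ^ 2 ∂μ < ⊤ := by
  intro q
  induction q with
  | zero =>
    intro f hfmeas hf hint k _
    induction k with
    | zero => exact hint
    | succ k ih =>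
      refine step hact hDmeas S k hfmeas (ih (Nat.zero_le k)) ?_
      intro s _
      have h0 : diffAct s⁻¹ f =ᵐ[μ] 0 := by
        have := hf (fun _ => s⁻¹)
        simpa using this
      have h0' : (fun x => (‖diffAct s⁻¹ f x‖₊ : ENNReal) ^ 2)
          =ᵐ[μ.restrict (SpowD S k D)] 0 := by
        filter_upwards [ae_restrict_of_ae h0] with x hx
        simp [hx]
      rw [lintegral_congr_ae h0']
      simpa using ENNReal.zero_lt_top
  | succ q ih =>
    intro f hfmeas hf hint k hk
    -- the difference functions have order one lower
    have hh : ∀ s ∈ S, ∀ k' : ℕ, q ≤ k' →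
        ∫⁻ x in SpowD S k' D, (‖diffAct s⁻¹ f x‖₊ : ENNReal) ^ 2 ∂μ < ⊤ := by
      intro s hs
      have hhm : Measurable (diffAct s⁻¹ f) := by
        have : diffAct s⁻¹ f = fun x => f (s • x) - f x := by
          funext x; simp [diffAct]
        rw [this]
        exact (hfmeas.comp (hact s).measurable).sub hfmeas
      refine ih (diffAct s⁻¹ f) hhm ?_ ?_
      · -- order condition for the difference function
        intro g
        have hlist : List.ofFn (Fin.snoc g s⁻¹ : Fin (q + 2) → Γ)
            = List.ofFn g ++ [s⁻¹] := by
          rw [List.ofFn_succ']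
          simp [Fin.snoc_castSucc, Fin.snoc_last, List.concat_eq_append]
        have := hf (Fin.snoc g s⁻¹)
        rwa [hlist, List.foldr_append, List.foldr_cons, List.foldr_nil] at this
      · -- square-integrability of the difference function on `S^q·D`
        have hE : MeasurableSet (SpowD S q D) :=
          spowD_measurableSet (fun γ => (hact γ).measurable) S q hDmeas
        have hg : Measurable fun x => (‖f x‖₊ : ENNReal) ^ 2 :=
          hfmeas.nnnorm.coe_nnreal_ennreal.pow_const 2
        have htr : ∫⁻ x in SpowD S q D, (‖f (s • x)‖₊ : ENNReal) ^ 2 ∂μ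
            = ∫⁻ x in s • SpowD S q D, (‖f x‖₊ : ENNReal) ^ 2 ∂μ :=
          (lintegral_smul_set hact s hE hg).symm
        have h1 : ∫⁻ x in SpowD S q D, (‖f (s • x)‖₊ : ENNReal) ^ 2 ∂μ < ⊤ := by
          rw [htr]
          exact lt_of_le_of_lt
            (lintegral_mono_set (smul_spowD_subset S q D hs)) hint
        have h2 : ∫⁻ x in SpowD S q D, (‖f x‖₊ : ENNReal) ^ 2 ∂μ < ⊤ :=
          lt_of_le_of_lt (lintegral_mono_set (spowD_mono S q D hSone)) hint
        have hpt : ∀ x, (‖diffAct s⁻¹ f x‖₊ : ENNReal) ^ 2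
            ≤ 4 * ((‖f (s • x)‖₊ : ENNReal) ^ 2 + (‖f x‖₊ : ENNReal) ^ 2) := by
          intro x
          have : diffAct s⁻¹ f x = f (s • x) + (- f x) := by
            simp [diffAct, sub_eq_add_neg]
          rw [this]
          simpa using nnnorm_add_sq_le (f (s • x)) (-(f x))
        calc ∫⁻ x in SpowD S q D, (‖diffAct s⁻¹ f x‖₊ : ENNReal) ^ 2 ∂μ
            ≤ ∫⁻ x in SpowD S q D,
                4 * ((‖f (s • x)‖₊ : ENNReal) ^ 2 + (‖f x‖₊ : ENNReal) ^ 2) ∂μ :=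
              lintegral_mono fun x => hpt x
          _ = 4 * (∫⁻ x in SpowD S q D, (‖f (s • x)‖₊ : ENNReal) ^ 2 ∂μ
                + ∫⁻ x in SpowD S q D, (‖f x‖₊ : ENNReal) ^ 2 ∂μ) := by
              have hgs : Measurable fun x => (‖f (s • x)‖₊ : ENNReal) ^ 2 :=
                (hfmeas.comp (hact s).measurable).nnnorm.coe_nnreal_ennreal.pow_const 2
              rw [lintegral_const_mul _ (show Measurable fun x => (‖f (s • x)‖₊ : ENNReal) ^ 2 + (‖f x‖₊ : ENNReal) ^ 2 from hgs.add hg), lintegral_add_left hgs]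
          _ < ⊤ := by
              refine ENNReal.mul_lt_top (by norm_num) ?_
              exact ENNReal.add_lt_top.2 ⟨h1, h2⟩
    -- inner induction on `k ≥ q + 1`
    induction k, hk using Nat.le_induction with
    | base => exact hint
    | succ k hk ihk =>
      exact step hact hDmeas S k hfmeas ihk
        (fun s hs => hh s hs k (le_trans (Nat.le_succ q) hk))

end Main

/-- If a countable group `Γ` acts on a measure space by measure preserving
(measurable) bijections, `f` is measurable and of higher order `q` up to null
functions, `D` is measurable with `Γ·D = X`, and `S` a finite symmetric generating
set containing `1`, then square-integrability of `f` on `S^q·D` implies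
square-integrability of `f` on `S^{q+j}·D` for every `j ≥ 0`. -/
theorem stmt6 {Γ X : Type*} [Group Γ] [Countable Γ] [MulAction Γ X]
    [MeasurableSpace X] (μ : Measure X)
    (hact : ∀ γ : Γ, MeasurePreserving (fun x : X => γ • x) μ μ)
    (D : Set X) (hDmeas : MeasurableSet D)
    (hD : ∀ x : X, ∃ γ : Γ, ∃ d ∈ D, x = γ • d)
    (S : Finset Γ) (hSsym : ∀ s ∈ S, s⁻¹ ∈ S) (hSone : (1 : Γ) ∈ S)
    (hSgen : Subgroup.closure (S : Set Γ) = ⊤)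
    (q : ℕ) (f : X → ℂ) (hfmeas : Measurable f)
    (hf : ∀ g : Fin (q + 1) → Γ, (List.ofFn g).foldr diffAct f =ᵐ[μ] 0)
    (hint : ∫⁻ x in SpowD S q D, (‖f x‖₊ : ENNReal) ^ 2 ∂μ < ⊤) :
    ∀ j : ℕ, ∫⁻ x in SpowD S (q + j) D, (‖f x‖₊ : ENNReal) ^ 2 ∂μ < ⊤ := by
  intro j
  exact key hact hDmeas S hSone q f hfmeas hf hint (q + j) (Nat.le_add_right q j)
end

section
/- Let V be a finite-dimensional complex normed vector space, let σ: V → V be a linear map with σ² = id_V, let ν ∈ ℂ, and let f: ℂ∖ℝ → V be holomorphic. Then the following are equivalent: (1) the function z ↦ f(z) − z^{−2ν−1}·σ(f(−1/z)), defined on ℂ∖ℝ, extends to a holomorphic function on ℂ∖(−∞,0]; (2) there exist an open set U ⊆ ℂ with ℝ∖{0} ⊆ U and U ∩ iℝ = ∅, and a holomorphic function q: U → V, such that (1+z^{−2})^{ν+1/2}·f(−1/z) = (1+z²)^{ν+1/2}·σ(f(z)) + q(z) for all z ∈ U∖ℝ. -/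
open Complex

private lemma im_one_add_sq {z : ℂ} : (1 + z ^ 2).im = 2 * z.re * z.im := by
  simp [pow_two, Complex.mul_im, Complex.add_im]
  ring

private lemma re_one_add_sq {z : ℂ} : (1 + z ^ 2).re = 1 + z.re * z.re - z.im * z.im := by
  simp [pow_two, Complex.mul_re, Complex.add_re]
  ring

private lemma one_add_sq_mem {z : ℂ} (h : z.re ≠ 0) : 1 + z ^ 2 ∈ Complex.slitPlane := by
  rcases eq_or_ne z.im 0 with h0 | h0
  · exact Or.inl (by rw [re_one_add_sq, h0]; nlinarith [mul_self_nonneg z.re])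
  · exact Or.inr (by rw [im_one_add_sq]; exact mul_ne_zero (mul_ne_zero two_ne_zero h) h0)

private lemma key_cpow {z : ℂ} (hre : 0 < z.re) (him : z.im ≠ 0) (s : ℂ) :
    (1 + (z⁻¹) ^ 2) ^ s = (1 + z ^ 2) ^ s * z ^ (-(2 * s)) := by
  have hz0 : z ≠ 0 := fun h => by simp [h] at hre
  have hsqim : (z ^ 2).im ≠ 0 := by
    have : (z ^ 2).im = 2 * z.re * z.im := by simp [pow_two, Complex.mul_im]; ring
    rw [this]
    exact mul_ne_zero (mul_ne_zero two_ne_zero hre.ne') him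
  have h1im : (1 + z ^ 2).im = (z ^ 2).im := by simp
  have h1ne : (1 : ℂ) + z ^ 2 ≠ 0 := fun h => hsqim (by rw [← h1im, h]; simp)
  have hz2ne : z ^ 2 ≠ 0 := pow_ne_zero _ hz0
  have e1 : 1 + (z⁻¹) ^ 2 = (1 + z ^ 2) * (z ^ 2)⁻¹ := by
    field_simp
    ring
  have hargz2_ne_pi : (z ^ 2).arg ≠ Real.pi := fun h => hsqim (Complex.arg_eq_pi_iff.mp h).2
  have harginv : ((z ^ 2)⁻¹).arg = -(z ^ 2).arg := by
    have h := congrArg Complex.im (Complex.log_inv (z ^ 2) hargz2_ne_pi)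
    simpa [Complex.log_im] using h
  have hmem : (1 + z ^ 2).arg + ((z ^ 2)⁻¹).arg ∈ Set.Ioc (-Real.pi) Real.pi := by
    rw [harginv]
    rcases lt_or_gt_of_ne hsqim with hneg | hpos
    · have ha1 : (1 + z ^ 2).arg < 0 := Complex.arg_neg_iff.mpr (by rw [h1im]; exact hneg)
      have ha2 : -Real.pi < (1 + z ^ 2).arg := Complex.neg_pi_lt_arg _
      have ha3 : (z ^ 2).arg < 0 := Complex.arg_neg_iff.mpr hneg
      have ha4 : -Real.pi < (z ^ 2).arg := Complex.neg_pi_lt_arg _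
      constructor <;> linarith
    · have ha1 : 0 ≤ (1 + z ^ 2).arg := Complex.arg_nonneg_iff.mpr (by rw [h1im]; exact hpos.le)
      have ha2 : (1 + z ^ 2).arg ≤ Real.pi := Complex.arg_le_pi _
      have ha3 : 0 ≤ (z ^ 2).arg := Complex.arg_nonneg_iff.mpr hpos.le
      have ha4 : (z ^ 2).arg < Real.pi := lt_of_le_of_ne (Complex.arg_le_pi _) hargz2_ne_pi
      constructor <;> linarith
  have hlogsq : Complex.log (z ^ 2) = 2 * Complex.log z := by
    have habs : |z.arg| < Real.pi / 2 := Complex.abs_arg_lt_pi_div_two_iff.mpr (Or.inl hre)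
    have hargmem : z.arg + z.arg ∈ Set.Ioc (-Real.pi) Real.pi := by
      have := abs_lt.mp habs
      constructor <;> [linarith [this.1]; linarith [this.2]]
    rw [pow_two, Complex.log_mul hz0 hz0 hargmem, two_mul]
  have hlog : Complex.log (1 + (z⁻¹) ^ 2) = Complex.log (1 + z ^ 2) - 2 * Complex.log z := by
    rw [e1, Complex.log_mul h1ne (inv_ne_zero hz2ne) hmem, Complex.log_inv _ hargz2_ne_pi,
      hlogsq]
    ring
  have hne : 1 + (z⁻¹) ^ 2 ≠ 0 := by
    rw [e1]; exact mul_ne_zero h1ne (inv_ne_zero hz2ne)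
  rw [Complex.cpow_def_of_ne_zero hne, Complex.cpow_def_of_ne_zero h1ne,
    Complex.cpow_def_of_ne_zero hz0, ← Complex.exp_add, hlog]
  congr 1
  ring

/-- Symmetry of gluing conditions: for `f` holomorphic on `ℂ∖ℝ`, the function
`z ↦ f(z) − z^{−2ν−1}·σ(f(−1/z))` extends holomorphically to `ℂ∖(−∞,0]` if and
only if `z ↦ (1+z^{−2})^{ν+1/2}·f(−1/z)` and `z ↦ (1+z²)^{ν+1/2}·σ(f(z))` define
the same hyperfunction on `ℝ∖{0}`, i.e. differ by a function holomorphic on a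
neighbourhood `U` of `ℝ∖{0}` with `U ∩ iℝ = ∅`. -/
theorem stmt7 {V : Type*} [NormedAddCommGroup V] [NormedSpace ℂ V]
    [FiniteDimensional ℂ V]
    (σ : V →ₗ[ℂ] V) (hσ : σ ∘ₗ σ = LinearMap.id) (ν : ℂ)
    (f : ℂ → V) (hf : DifferentiableOn ℂ f {z : ℂ | z.im ≠ 0}) :
    (∃ g : ℂ → V, DifferentiableOn ℂ g Complex.slitPlane ∧
        ∀ z : ℂ, z.im ≠ 0 →
          g z = f z - (z ^ (-2 * ν - 1)) • σ (f (-1 / z))) ↔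
    (∃ U : Set ℂ, IsOpen U ∧ {z : ℂ | z.im = 0 ∧ z.re ≠ 0} ⊆ U ∧
        (∀ z ∈ U, z.re ≠ 0) ∧
        ∃ q : ℂ → V, DifferentiableOn ℂ q U ∧
          ∀ z ∈ U, z.im ≠ 0 →
            ((1 + (z⁻¹) ^ 2) ^ (ν + 1 / 2)) • f (-1 / z) =
              ((1 + z ^ 2) ^ (ν + 1 / 2)) • σ (f z) + q z) := by
  have hσσ : ∀ v : V, σ (σ v) = v := fun v => by
    have := LinearMap.ext_iff.mp hσ v
    simpa using this
  set T : V →L[ℂ] V := LinearMap.toContinuousLinearMap σ with hT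
  have hTσ : ∀ v, T v = σ v := fun _ => rfl
  have hzp : ∀ w : ℂ, w ^ (-(2 * (ν + 1 / 2))) = w ^ (-2 * ν - 1) := fun w =>
    congrArg (fun t : ℂ => w ^ t) (by ring)
  have hopen_im : IsOpen {z : ℂ | z.im ≠ 0} := by
    have : {z : ℂ | z.im ≠ 0} = Complex.im ⁻¹' ({0}ᶜ) := rfl
    rw [this]
    exact isOpen_compl_singleton.preimage Complex.continuous_im
  have hinv_im : ∀ z : ℂ, (-1 / z).im = z.im / Complex.normSq z := by
    intro z
    rw [neg_div, one_div, Complex.neg_im, Complex.inv_im]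
    ring
  have hinv_re : ∀ z : ℂ, (-1 / z).re = -z.re / Complex.normSq z := by
    intro z
    rw [neg_div, one_div, Complex.neg_re, Complex.inv_re]
    ring
  have hinv_im_ne : ∀ z : ℂ, z.im ≠ 0 → (-1 / z).im ≠ 0 := by
    intro z hz
    rw [hinv_im]
    have hz0 : z ≠ 0 := fun h => hz (by simp [h])
    exact div_ne_zero hz ((Complex.normSq_pos.mpr hz0).ne')
  -- differentiability of the "-1/z" map
  have hneg_inv_diff : ∀ z : ℂ, z ≠ 0 → DifferentiableAt ℂ (fun w : ℂ => -1 / w) z := by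
    intro z hz
    exact (differentiableAt_const (-1 : ℂ)).div differentiableAt_id hz
  -- differentiability of F on {im ≠ 0}
  have hFdiff : ∀ x : ℂ, x.im ≠ 0 →
      DifferentiableAt ℂ (fun z => f z - (z ^ (-2 * ν - 1)) • σ (f (-1 / z))) x := by
    intro x hx
    have hx0 : x ≠ 0 := fun h => hx (by simp [h])
    have hfd : DifferentiableAt ℂ f x := hf.differentiableAt (hopen_im.mem_nhds hx)
    have hcp : DifferentiableAt ℂ (fun z : ℂ => z ^ (-2 * ν - 1)) x :=
      differentiableAt_id.cpow (differentiableAt_const _) (Or.inr hx)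
    have hfinv : DifferentiableAt ℂ (fun z => f (-1 / z)) x := by
      have h1 : DifferentiableAt ℂ f (-1 / x) :=
        hf.differentiableAt (hopen_im.mem_nhds (hinv_im_ne x hx))
      exact h1.comp x (hneg_inv_diff x hx0)
    have hσf : DifferentiableAt ℂ (fun z => σ (f (-1 / z))) x :=
      (T.differentiable.differentiableAt).comp x hfinv
    exact hfd.sub (hcp.smul hσf)
  constructor
  · rintro ⟨g, hg, hgf⟩
    refine ⟨{z : ℂ | z.re ≠ 0}, ?_, fun z hz => hz.2, fun z hz => hz, ?_⟩
    · have : {z : ℂ | z.re ≠ 0} = Complex.re ⁻¹' ({0}ᶜ) := rfl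
      rw [this]
      exact isOpen_compl_singleton.preimage Complex.continuous_re
    · refine ⟨fun z => if 0 < z.re then -(((1 + z ^ 2) ^ (ν + 1 / 2)) • σ (g z))
        else ((1 + (z⁻¹) ^ 2) ^ (ν + 1 / 2)) • g (-1 / z), ?_, ?_⟩
      · intro x hx
        rcases lt_or_gt_of_ne (hx : x.re ≠ 0) with hneg | hpos
        · -- left half-plane
          have hopen : IsOpen {z : ℂ | z.re < 0} := isOpen_lt Complex.continuous_re continuous_const
          have hmem : x ∈ {z : ℂ | z.re < 0} := hneg
          have hφ : DifferentiableAt ℂ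
              (fun z : ℂ => ((1 + (z⁻¹) ^ 2) ^ (ν + 1 / 2)) • g (-1 / z)) x := by
            have hx0 : x ≠ 0 := fun h => by simp [h] at hneg
            have hbase : DifferentiableAt ℂ (fun z : ℂ => 1 + (z⁻¹) ^ 2) x :=
              (differentiableAt_const 1).add ((differentiableAt_inv hx0).pow 2)
            have hbmem : 1 + (x⁻¹) ^ 2 ∈ Complex.slitPlane := by
              apply one_add_sq_mem
              rw [Complex.inv_re]
              exact div_ne_zero hneg.ne ((Complex.normSq_pos.mpr hx0).ne')
            have hcp : DifferentiableAt ℂ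
                (fun z : ℂ => (1 + (z⁻¹) ^ 2) ^ (ν + 1 / 2)) x :=
              hbase.cpow (differentiableAt_const _) hbmem
            have hgmem : -1 / x ∈ Complex.slitPlane := by
              left
              rw [hinv_re]
              exact div_pos (by linarith) (Complex.normSq_pos.mpr hx0)
            have hgd : DifferentiableAt ℂ (fun z => g (-1 / z)) x :=
              (hg.differentiableAt (Complex.isOpen_slitPlane.mem_nhds hgmem)).comp x
                (hneg_inv_diff x hx0)
            exact hcp.smul hgd
          have heq : (fun z => if 0 < z.re then -(((1 + z ^ 2) ^ (ν + 1 / 2)) • σ (g z))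
              else ((1 + (z⁻¹) ^ 2) ^ (ν + 1 / 2)) • g (-1 / z)) =ᶠ[nhds x]
              (fun z : ℂ => ((1 + (z⁻¹) ^ 2) ^ (ν + 1 / 2)) • g (-1 / z)) := by
            filter_upwards [hopen.mem_nhds hmem] with z hz
            exact if_neg (by simp at hz ⊢; linarith)
          exact (hφ.congr_of_eventuallyEq heq).differentiableWithinAt
        · -- right half-plane
          have hopen : IsOpen {z : ℂ | 0 < z.re} := isOpen_lt continuous_const Complex.continuous_re
          have hmem : x ∈ {z : ℂ | 0 < z.re} := hpos
          have hφ : DifferentiableAt ℂ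
              (fun z : ℂ => -(((1 + z ^ 2) ^ (ν + 1 / 2)) • σ (g z))) x := by
            have hbase : DifferentiableAt ℂ (fun z : ℂ => 1 + z ^ 2) x :=
              (differentiableAt_const 1).add (differentiableAt_id.pow 2)
            have hcp : DifferentiableAt ℂ (fun z : ℂ => (1 + z ^ 2) ^ (ν + 1 / 2)) x :=
              hbase.cpow (differentiableAt_const _) (one_add_sq_mem hpos.ne')
            have hgd : DifferentiableAt ℂ (fun z => σ (g z)) x :=
              (T.differentiable.differentiableAt).comp x
                (hg.differentiableAt (Complex.isOpen_slitPlane.mem_nhds (Or.inl hpos)))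
            exact (hcp.smul hgd).neg
          have heq : (fun z => if 0 < z.re then -(((1 + z ^ 2) ^ (ν + 1 / 2)) • σ (g z))
              else ((1 + (z⁻¹) ^ 2) ^ (ν + 1 / 2)) • g (-1 / z)) =ᶠ[nhds x]
              (fun z : ℂ => -(((1 + z ^ 2) ^ (ν + 1 / 2)) • σ (g z))) := by
            filter_upwards [hopen.mem_nhds hmem] with z hz
            exact if_pos hz
          exact (hφ.congr_of_eventuallyEq heq).differentiableWithinAt
      · intro z hz him
        have hz0 : z ≠ 0 := fun h => him (by simp [h])
        rcases lt_or_gt_of_ne (hz : z.re ≠ 0) with hneg | hpos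
        · simp only [if_neg (show ¬ (0 : ℝ) < z.re by linarith)]
          set w : ℂ := -1 / z with hw
          have hwz : -1 / w = z := by
            rw [hw]; field_simp
          have hwre : 0 < w.re := by
            rw [hw, hinv_re]
            exact div_pos (by linarith) (Complex.normSq_pos.mpr hz0)
          have hwim : w.im ≠ 0 := hinv_im_ne z him
          have hw0 : w ≠ 0 := fun h => hwim (by simp [h])
          have hgw := hgf w hwim
          rw [hwz] at hgw
          have hwinv : w⁻¹ = -z := by
            rw [hw]; field_simp
          have hkey : (1 + z ^ 2) ^ (ν + 1 / 2)
              = (1 + (z⁻¹) ^ 2) ^ (ν + 1 / 2) * w ^ (-2 * ν - 1) := by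
            have h := key_cpow hwre hwim (ν + 1 / 2)
            rw [hwinv, neg_sq, hzp w] at h
            rw [h]
            congr 2
            rw [hw]
            field_simp
          rw [hgw, hkey]
          module
        · simp only [if_pos hpos]
          have hgz := hgf z him
          have hσg : σ (g z) = σ (f z) - (z ^ (-2 * ν - 1)) • f (-1 / z) := by
            rw [hgz, map_sub, map_smul, hσσ]
          have hkey := key_cpow hpos him (ν + 1 / 2)
          rw [hzp z] at hkey
          rw [hσg, hkey]
          module
  · rintro ⟨U, hUo, hUsub, hUre, q, hq, hid⟩
    refine ⟨fun z => if z.im ≠ 0 then f z - (z ^ (-2 * ν - 1)) • σ (f (-1 / z))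
      else (-((1 + z ^ 2) ^ (-(ν + 1 / 2)))) • σ (q z), ?_, fun z hz => if_pos hz⟩
    intro x hx
    rcases eq_or_ne x.im 0 with him0 | him
    · -- real point, 0 < x.re
      have hxre : 0 < x.re := by
        rcases (Complex.mem_slitPlane_iff.mp hx) with h | h
        · exact h
        · exact absurd him0 h
      have hxU : x ∈ U := hUsub ⟨him0, hxre.ne'⟩
      set N : Set ℂ := U ∩ {z : ℂ | 0 < z.re} with hN
      have hNo : IsOpen N := hUo.inter (isOpen_lt continuous_const Complex.continuous_re)
      have hxN : x ∈ N := ⟨hxU, hxre⟩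
      have hφ : DifferentiableAt ℂ
          (fun z : ℂ => (-((1 + z ^ 2) ^ (-(ν + 1 / 2)))) • σ (q z)) x := by
        have hbase : DifferentiableAt ℂ (fun z : ℂ => 1 + z ^ 2) x :=
          (differentiableAt_const 1).add (differentiableAt_id.pow 2)
        have hcp : DifferentiableAt ℂ (fun z : ℂ => -((1 + z ^ 2) ^ (-(ν + 1 / 2)))) x :=
          (hbase.cpow (differentiableAt_const _) (one_add_sq_mem hxre.ne')).neg
        have hqd : DifferentiableAt ℂ (fun z => σ (q z)) x :=
          (T.differentiable.differentiableAt).comp x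
            (hq.differentiableAt (hUo.mem_nhds hxU))
        exact hcp.smul hqd
      have heqN : ∀ z ∈ N, (if z.im ≠ 0 then f z - (z ^ (-2 * ν - 1)) • σ (f (-1 / z))
          else (-((1 + z ^ 2) ^ (-(ν + 1 / 2)))) • σ (q z))
          = (-((1 + z ^ 2) ^ (-(ν + 1 / 2)))) • σ (q z) := by
        rintro z ⟨hzU, hzre⟩
        rcases eq_or_ne z.im 0 with h0 | h0
        · rw [if_neg (by simpa using h0)]
        · rw [if_pos h0]
          have h2 := hid z hzU h0
          have hkey := key_cpow hzre h0 (ν + 1 / 2)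
          rw [hzp z] at hkey
          rw [hkey] at h2
          have h1ne : (1 : ℂ) + z ^ 2 ≠ 0 :=
            Complex.slitPlane_ne_zero (one_add_sq_mem (hUre z hzU))
          have hcne : ((1 : ℂ) + z ^ 2) ^ (ν + 1 / 2) ≠ 0 := by
            rw [Complex.cpow_def_of_ne_zero h1ne]
            exact Complex.exp_ne_zero _
          have h3 : q z = (((1 + z ^ 2) ^ (ν + 1 / 2)) * z ^ (-2 * ν - 1)) • f (-1 / z)
              - ((1 + z ^ 2) ^ (ν + 1 / 2)) • σ (f z) := by
            rw [h2]; abel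
          rw [h3, map_sub, map_smul, map_smul, hσσ, Complex.cpow_neg]
          have hcne2 : (1 + z ^ 2) ^ ((ν * 2 + 1) / 2) ≠ 0 := by
            rw [Complex.cpow_def_of_ne_zero h1ne]
            exact Complex.exp_ne_zero _
          have hcne3 : (1 + z ^ 2) ^ ((1 : ℂ) / 2 + ν) ≠ 0 := by
            rw [add_comm ((1 : ℂ) / 2)]; exact hcne
          match_scalars
          all_goals (field_simp [hcne2]; try ring)
          all_goals rw [mul_assoc, mul_inv_cancel₀ hcne3, mul_one]
      have heq : (fun z => if z.im ≠ 0 then f z - (z ^ (-2 * ν - 1)) • σ (f (-1 / z))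
          else (-((1 + z ^ 2) ^ (-(ν + 1 / 2)))) • σ (q z)) =ᶠ[nhds x]
          (fun z : ℂ => (-((1 + z ^ 2) ^ (-(ν + 1 / 2)))) • σ (q z)) := by
        filter_upwards [hNo.mem_nhds hxN] with z hz
        exact heqN z hz
      exact (hφ.congr_of_eventuallyEq heq).differentiableWithinAt
    · have hφ := hFdiff x him
      have heq : (fun z => if z.im ≠ 0 then f z - (z ^ (-2 * ν - 1)) • σ (f (-1 / z))
          else (-((1 + z ^ 2) ^ (-(ν + 1 / 2)))) • σ (q z)) =ᶠ[nhds x]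
          (fun z => f z - (z ^ (-2 * ν - 1)) • σ (f (-1 / z))) := by
        filter_upwards [hopen_im.mem_nhds him] with z hz
        exact if_pos hz
      exact (hφ.congr_of_eventuallyEq heq).differentiableWithinAt
end

section
/- Let f: ℂ∖ℝ → V be holomorphic with f(z+1) = η(T)·f(z) for all z ∈ ℂ∖ℝ, and define ψ(z) = f(z) − z^{−2ν−1}·η(S)(f(−1/z)) for z ∈ ℂ∖ℝ. Then ψ satisfies the Lewis equation at every z ∈ ℂ∖ℝ, i.e. η(T)ψ(z) = ψ(z+1) + (z+1)^{−2ν−1}·η(ST^{−1})(ψ(z/(z+1))) for all z ∈ ℂ∖ℝ. -/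
open Complex Real


lemma argsum (z : ℂ) (hz : z.im ≠ 0) :
    arg (z + 1) + arg (z / (z + 1)) = arg z := by
  have ha_im : (z + 1).im = z.im := by simp
  have ha0 : z + 1 ≠ 0 := fun h => hz (by simpa [h] using ha_im.symm)
  have hz0 : z ≠ 0 := fun h => hz (by simp [h])
  have hN : 0 < Complex.normSq (z + 1) := Complex.normSq_pos.2 ha0
  have hb_im : (z / (z + 1)).im = z.im / Complex.normSq (z + 1) := by
    rw [Complex.div_im, ha_im]
    have : (z + 1).re = z.re + 1 := by simp
    rw [this]; ring
  have hb0 : z / (z + 1) ≠ 0 := div_ne_zero hz0 ha0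
  have hmul : (z + 1) * (z / (z + 1)) = z := by field_simp
  have hangle := Complex.arg_mul_coe_angle ha0 hb0
  rw [hmul, ← Real.Angle.coe_add, Real.Angle.angle_eq_iff_two_pi_dvd_sub] at hangle
  obtain ⟨k, hk⟩ := hangle
  have hpi := Real.pi_pos
  have hklt : -(2 * π) < 2 * π * k ∧ 2 * π * k < 2 * π := by
    rw [← hk]
    rcases hz.lt_or_gt with h | h
    · have h1 : arg (z + 1) < 0 := Complex.arg_neg_iff.2 (by rw [ha_im]; exact h)
      have h2 : arg (z / (z + 1)) < 0 := Complex.arg_neg_iff.2 (by rw [hb_im]; exact div_neg_of_neg_of_pos h hN)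
      have h3 : arg z < 0 := Complex.arg_neg_iff.2 h
      have h4 := Complex.neg_pi_lt_arg (z + 1)
      have h5 := Complex.neg_pi_lt_arg (z / (z + 1))
      have h6 := Complex.neg_pi_lt_arg z
      constructor <;> nlinarith
    · have h1 : 0 ≤ arg (z + 1) := Complex.arg_nonneg_iff.2 (by rw [ha_im]; exact h.le)
      have h2 : 0 ≤ arg (z / (z + 1)) := Complex.arg_nonneg_iff.2 (by rw [hb_im]; positivity)
      have h3 : 0 ≤ arg z := Complex.arg_nonneg_iff.2 h.le
      have h4 : arg (z + 1) < π := Complex.arg_lt_pi_iff.2 (Or.inr (by rw [ha_im]; exact hz))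
      have h5 : arg (z / (z + 1)) < π := Complex.arg_lt_pi_iff.2 (Or.inr (by rw [hb_im]; positivity))
      have h6 := Complex.arg_le_pi z
      constructor <;> nlinarith
  have hk0 : k = 0 := by
    have h1 : (-1 : ℝ) < k := by nlinarith [hklt.1]
    have h2 : (k : ℝ) < 1 := by nlinarith [hklt.2]
    have h1' : (-1 : ℤ) < k := by exact_mod_cast (show ((-1 : ℤ) : ℝ) < (k : ℝ) by push_cast; linarith)
    have h2' : k < (1 : ℤ) := by exact_mod_cast (show ((k : ℤ) : ℝ) < ((1 : ℤ) : ℝ) by push_cast; linarith)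
    omega
  rw [hk0] at hk
  push_cast at hk
  linarith

lemma cpow_key (z : ℂ) (hz : z.im ≠ 0) (s : ℂ) :
    (z + 1) ^ s * (z / (z + 1)) ^ s = z ^ s := by
  have ha_im : (z + 1).im = z.im := by simp
  have ha0 : z + 1 ≠ 0 := fun h => hz (by simpa [h] using ha_im.symm)
  have hz0 : z ≠ 0 := fun h => hz (by simp [h])
  have hb0 : z / (z + 1) ≠ 0 := div_ne_zero hz0 ha0
  have hmul : (z + 1) * (z / (z + 1)) = z := by field_simp
  have hlog : Complex.log z = Complex.log (z + 1) + Complex.log (z / (z + 1)) := by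
    conv_lhs => rw [← hmul]
    exact Complex.log_mul ha0 hb0 (by
      rw [argsum z hz]
      exact ⟨Complex.neg_pi_lt_arg z, Complex.arg_le_pi z⟩)
  rw [Complex.cpow_def_of_ne_zero ha0, Complex.cpow_def_of_ne_zero hb0,
    Complex.cpow_def_of_ne_zero hz0, ← Complex.exp_add, hlog]
  ring_nf


/-- `SL₂(ℤ)`. -/
abbrev SL2Z := Matrix.SpecialLinearGroup (Fin 2) ℤ

/-- The matrix `T = [[1,1],[0,1]]`. -/
def Tm : SL2Z := ⟨!![1, 1; 0, 1], by norm_num [Matrix.det_fin_two_of]⟩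

/-- The matrix `S = [[0,1],[−1,0]]`. -/
def Sm : SL2Z := ⟨!![0, 1; -1, 0], by norm_num [Matrix.det_fin_two_of]⟩

/-- The matrix `T' = [[1,0],[1,1]]`. -/
def Tm' : SL2Z := ⟨!![1, 0; 1, 1], by norm_num [Matrix.det_fin_two_of]⟩

/-- The matrix `−I`. -/
def negI : SL2Z := ⟨!![-1, 0; 0, -1], by norm_num [Matrix.det_fin_two_of]⟩

/-- `ψ` satisfies the Lewis equation with parameter `ν` at the point `z`. -/
def LewisEq {V : Type*} [NormedAddCommGroup V] [NormedSpace ℂ V]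
    (η : SL2Z →* Module.End ℂ V) (ν : ℂ) (ψ : ℂ → V) (z : ℂ) : Prop :=
  η Tm (ψ z) =
    ψ (z + 1) + ((z + 1) ^ (-2 * ν - 1)) • η (Sm * Tm⁻¹) (ψ (z / (z + 1)))

/-- If `f` is holomorphic on `ℂ∖ℝ` with `f(z+1) = η(T)f(z)` and
`ψ(z) = f(z) − z^{−2ν−1}·η(S)f(−1/z)`, then `ψ` satisfies the Lewis equation at
every `z ∈ ℂ∖ℝ`. -/
theorem stmt8 {V : Type*} [NormedAddCommGroup V] [NormedSpace ℂ V]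
    [FiniteDimensional ℂ V] [Nontrivial V]
    (η : SL2Z →* Module.End ℂ V) (hη : η negI = 1) (ν : ℂ)
    (f : ℂ → V) (hf : DifferentiableOn ℂ f {z : ℂ | z.im ≠ 0})
    (hper : ∀ z : ℂ, z.im ≠ 0 → f (z + 1) = η Tm (f z))
    (ψ : ℂ → V)
    (hψ : ∀ z : ℂ, z.im ≠ 0 →
      ψ z = f z - (z ^ (-2 * ν - 1)) • η Sm (f (-1 / z))) :
    ∀ z : ℂ, z.im ≠ 0 → LewisEq η ν ψ z := by
  have hTinv : Tm⁻¹ = (⟨!![1, -1; 0, 1], by norm_num [Matrix.det_fin_two_of]⟩ : SL2Z) := by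
    apply inv_eq_of_mul_eq_one_right
    apply Subtype.ext
    change (Tm : Matrix (Fin 2) (Fin 2) ℤ) * !![1, -1; 0, 1] = 1
    simp [Tm, Matrix.mul_fin_two, Matrix.one_fin_two]
  have hG : Sm * Tm⁻¹ * Sm = Tm * Sm * Tm := by
    rw [hTinv]
    apply Subtype.ext
    change (Sm : Matrix (Fin 2) (Fin 2) ℤ) * !![1, -1; 0, 1] * (Sm : Matrix (Fin 2) (Fin 2) ℤ) =
      (Tm : Matrix (Fin 2) (Fin 2) ℤ) * (Sm : Matrix (Fin 2) (Fin 2) ℤ) * (Tm : Matrix (Fin 2) (Fin 2) ℤ)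
    simp [Tm, Sm, Matrix.mul_fin_two]
  have comp1 : ∀ x : V, η (Sm * Tm⁻¹) (η Tm x) = η Sm x := fun x => by
    rw [← Module.End.mul_apply, ← map_mul, inv_mul_cancel_right]
  have comp2 : ∀ x : V, η (Sm * Tm⁻¹) (η Sm x) = η Tm (η Sm (η Tm x)) := fun x => by
    rw [← Module.End.mul_apply, ← map_mul, hG, map_mul, map_mul,
      Module.End.mul_apply, Module.End.mul_apply]
  intro z hz
  have ha_im : (z + 1).im = z.im := by simp
  have hz1 : (z + 1).im ≠ 0 := by rwa [ha_im]
  have hz0 : z ≠ 0 := fun h => hz (by simp [h])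
  have ha0 : z + 1 ≠ 0 := fun h => hz1 (by simp [h])
  have hN : 0 < Complex.normSq (z + 1) := Complex.normSq_pos.2 ha0
  have hNz : 0 < Complex.normSq z := Complex.normSq_pos.2 hz0
  have hw_im : (z / (z + 1)).im = z.im / Complex.normSq (z + 1) := by
    rw [Complex.div_im, ha_im]
    have : (z + 1).re = z.re + 1 := by simp
    rw [this]; ring
  have hw : (z / (z + 1)).im ≠ 0 := by
    rw [hw_im]; exact div_ne_zero hz hN.ne'
  have hw0 : z / (z + 1) ≠ 0 := div_ne_zero hz0 ha0
  have hNw : 0 < Complex.normSq (z / (z + 1)) := Complex.normSq_pos.2 hw0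
  have neg_inv_im : ∀ u : ℂ, (-1 / u).im = u.im / Complex.normSq u := by
    intro u
    rw [Complex.div_im]
    simp
    ring
  have hmz1 : (-1 / (z + 1)).im ≠ 0 := by
    rw [neg_inv_im, ha_im]; exact div_ne_zero hz hN.ne'
  have hmw : (-1 / (z / (z + 1))).im ≠ 0 := by
    rw [neg_inv_im]; exact div_ne_zero hw hNw.ne'
  have e1 : -1 / (z + 1) + 1 = z / (z + 1) := by field_simp; ring
  have e2 : -1 / (z / (z + 1)) + 1 = -1 / z := by
    field_simp
    ring
  have hfw : f (z / (z + 1)) = η Tm (f (-1 / (z + 1))) := by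
    rw [← e1]; exact hper _ hmz1
  have hfmz : f (-1 / z) = η Tm (f (-1 / (z / (z + 1)))) := by
    rw [← e2]; exact hper _ hmw
  have hfz : f (z + 1) = η Tm (f z) := hper z hz
  unfold LewisEq
  rw [hψ z hz, hψ (z + 1) hz1, hψ (z / (z + 1)) hw, hfz, hfw, hfmz]
  simp only [map_sub, map_smul, comp1, comp2, smul_sub, smul_smul]
  rw [cpow_key z hz]
  abel
end

section
/- Let ν ∈ ℂ with ν ∉ 1/2 + ℤ, and let ψ: ℂ∖(−∞,0] → V be holomorphic and satisfy the Lewis equation at every z ∈ ℂ∖(−∞,0]. Define f: ℂ∖ℝ → V by f(z) = (1 + e^{−2πiν})^{−1}·(ψ(z) + z^{−2ν−1}·η(S)(ψ(−1/z))) for z in the upper half-plane, and f(z) = (1 + e^{+2πiν})^{−1}·(ψ(z) + z^{−2ν−1}·η(S)(ψ(−1/z))) for z in the lower half-plane. Then f(z+1) = η(T)·f(z) for all z ∈ ℂ∖ℝ. -/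
open Complex Real

lemma arg_mem_pos {w : ℂ} (h : 0 < w.im) : 0 < arg w ∧ arg w < π := by
  constructor
  · rcases lt_or_eq_of_le (arg_nonneg_iff.mpr h.le) with h' | h'
    · exact h'
    · exact absurd (arg_eq_zero_iff.mp h'.symm).2 h.ne'
  · rcases lt_or_eq_of_le (arg_le_pi w) with h' | h'
    · exact h'
    · exact absurd (arg_eq_pi_iff.mp h').2 h.ne'

lemma arg_mem_neg {w : ℂ} (h : w.im < 0) : -π < arg w ∧ arg w < 0 :=
  ⟨neg_pi_lt_arg w, arg_neg_iff.mpr h⟩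

lemma log_split {z : ℂ} (hz : z.im ≠ 0) :
    Complex.log z = Complex.log (z + 1) + Complex.log (z / (z + 1)) := by
  have hz0 : z ≠ 0 := fun h => hz (by simp [h])
  have hu0 : z + 1 ≠ 0 := fun h => by
    have := congrArg Complex.im h; simp at this; exact hz this
  have hv0 : z / (z + 1) ≠ 0 := div_ne_zero hz0 hu0
  have hN : (0:ℝ) < Complex.normSq (z + 1) := Complex.normSq_pos.mpr hu0
  have himu : (z + 1).im = z.im := by simp
  have himv : (z / (z + 1)).im = z.im / Complex.normSq (z + 1) := by
    rw [Complex.div_im]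
    field_simp
    simp only [Complex.add_re, Complex.add_im, Complex.one_re, Complex.one_im]
    ring
  have hexp : Complex.exp (Complex.log (z+1) + Complex.log (z/(z+1))) = Complex.exp (Complex.log z) := by
    rw [Complex.exp_add, Complex.exp_log hu0, Complex.exp_log hv0, Complex.exp_log hz0]
    field_simp
  obtain ⟨n, hn⟩ := Complex.exp_eq_exp_iff_exists_int.mp hexp
  have hni : (((n:ℂ)) * (2 * (π:ℂ) * I)).im = (n:ℝ) * (2 * π) := by
    simp [Complex.mul_im, Complex.mul_re]
  have him := congrArg Complex.im hn
  rw [Complex.add_im, Complex.add_im, Complex.log_im, Complex.log_im, Complex.log_im,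
    hni] at him
  -- him : arg (z+1) + arg (z/(z+1)) = arg z + n * (2*π)
  have hn0 : n = 0 := by
    have hπ : (0:ℝ) < π := Real.pi_pos
    have hb : -(2*π) < (n:ℝ) * (2*π) ∧ (n:ℝ) * (2*π) < 2*π := by
      rcases hz.lt_or_gt with hneg | hpos
      · have h1 := arg_mem_neg hneg
        have h2 := arg_mem_neg (himu ▸ hneg : (z+1).im < 0)
        have h3 := arg_mem_neg (show (z/(z+1)).im < 0 by
          rw [himv]; exact div_neg_of_neg_of_pos hneg hN)
        constructor <;> nlinarith [h1.1, h1.2, h2.1, h2.2, h3.1, h3.2]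
      · have h1 := arg_mem_pos hpos
        have h2 := arg_mem_pos (himu ▸ hpos : 0 < (z+1).im)
        have h3 := arg_mem_pos (show 0 < (z/(z+1)).im by
          rw [himv]; exact div_pos hpos hN)
        constructor <;> nlinarith [h1.1, h1.2, h2.1, h2.2, h3.1, h3.2]
    have h1 : (-1:ℝ) < (n:ℝ) := by nlinarith [hb.1]
    have h2 : (n:ℝ) < (1:ℝ) := by nlinarith [hb.2]
    have h1' : (-1:ℤ) < n := by exact_mod_cast h1
    have h2' : n < (1:ℤ) := by exact_mod_cast h2
    omega
  rw [hn0] at hn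
  simp at hn
  exact hn.symm

lemma cpow_split {z : ℂ} (hz : z.im ≠ 0) (a : ℂ) :
    z ^ a = (z + 1) ^ a * (z / (z + 1)) ^ a := by
  have hz0 : z ≠ 0 := fun h => hz (by simp [h])
  have hu0 : z + 1 ≠ 0 := fun h => by
    have := congrArg Complex.im h; simp at this; exact hz this
  have hv0 : z / (z + 1) ≠ 0 := div_ne_zero hz0 hu0
  rw [cpow_def_of_ne_zero hz0, cpow_def_of_ne_zero hu0, cpow_def_of_ne_zero hv0,
    ← Complex.exp_add, log_split hz, add_mul]


lemma SL2Z_STinv_sq : Sm * Tm⁻¹ * (Sm * Tm⁻¹) = Tm * Sm := by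
  have hTi : Tm⁻¹ = ⟨!![1, -1; 0, 1], by norm_num [Matrix.det_fin_two_of]⟩ := by
    refine (eq_inv_of_mul_eq_one_left ?_).symm
    ext i j
    fin_cases i <;> fin_cases j <;>
      erw [Matrix.SpecialLinearGroup.coe_mul] <;>
      simp [Tm, Matrix.SpecialLinearGroup.coe_mul, Matrix.mul_apply, Fin.sum_univ_two]
  rw [hTi]
  ext i j
  fin_cases i <;> fin_cases j <;>
    simp only [Matrix.SpecialLinearGroup.coe_mul, Matrix.mul_apply, Fin.sum_univ_two] <;>
    erw [Matrix.SpecialLinearGroup.coe_mul] <;>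
    simp [Tm, Sm, Matrix.SpecialLinearGroup.coe_mul, Matrix.mul_apply, Fin.sum_univ_two]

/-- If `ν ∉ 1/2 + ℤ`, `ψ` is holomorphic on `ℂ∖(−∞,0]` satisfying the Lewis
equation there, and `f` is defined from `ψ` by the inversion formula on the
upper and lower half-planes, then `f(z+1) = η(T)·f(z)` on `ℂ∖ℝ`. -/
theorem stmt9 {V : Type*} [NormedAddCommGroup V] [NormedSpace ℂ V]
    [FiniteDimensional ℂ V] [Nontrivial V]
    (η : SL2Z →* Module.End ℂ V) (hη : η negI = 1) (ν : ℂ)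
    (hν : ∀ n : ℤ, ν ≠ 1 / 2 + n)
    (ψ : ℂ → V) (hψhol : DifferentiableOn ℂ ψ Complex.slitPlane)
    (hψlewis : ∀ z ∈ Complex.slitPlane, LewisEq η ν ψ z)
    (f : ℂ → V)
    (hup : ∀ z : ℂ, 0 < z.im →
      f z = (1 + Complex.exp (-2 * Real.pi * I * ν))⁻¹ •
        (ψ z + (z ^ (-2 * ν - 1)) • η Sm (ψ (-1 / z))))
    (hdown : ∀ z : ℂ, z.im < 0 →
      f z = (1 + Complex.exp (2 * Real.pi * I * ν))⁻¹ •
        (ψ z + (z ^ (-2 * ν - 1)) • η Sm (ψ (-1 / z)))) :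
    ∀ z : ℂ, z.im ≠ 0 → f (z + 1) = η Tm (f z) := by
  intro z hz
  have hz0 : z ≠ 0 := fun h => hz (by simp [h])
  have hu0 : z + 1 ≠ 0 := fun h => by
    have := congrArg Complex.im h; simp at this; exact hz this
  have hN : (0:ℝ) < Complex.normSq (z + 1) := Complex.normSq_pos.mpr hu0
  have hzs : z ∈ Complex.slitPlane := Complex.mem_slitPlane_iff.mpr (Or.inr hz)
  have hwim : (-1 / (z + 1)).im = z.im / Complex.normSq (z + 1) := by
    rw [Complex.div_im]
    field_simp
    simp
  have hwim' : (-1 / (z + 1)).im ≠ 0 := by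
    rw [hwim]; exact div_ne_zero hz hN.ne'
  have hws : (-1 / (z + 1)) ∈ Complex.slitPlane :=
    Complex.mem_slitPlane_iff.mpr (Or.inr hwim')
  have L1 := hψlewis z hzs
  have L2 := hψlewis (-1 / (z + 1)) hws
  simp only [LewisEq] at L1 L2
  have e1 : -1 / (z + 1) + 1 = z / (z + 1) := by field_simp; ring
  rw [e1] at L2
  have e2 : -1 / (z + 1) / (z / (z + 1)) = -1 / z := by
    field_simp
  rw [e2] at L2
  -- L2 : η Tm (ψ (-1/(z+1))) = ψ (z/(z+1)) + ((z/(z+1))^(-2ν-1)) • η (Sm*Tm⁻¹) (ψ (-1/z))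
  have hsub : ψ (z / (z + 1)) = η Tm (ψ (-1 / (z + 1))) -
      ((z / (z + 1)) ^ (-2 * ν - 1)) • η (Sm * Tm⁻¹) (ψ (-1 / z)) := by
    rw [L2]; abel
  have comp : ∀ (g h : SL2Z) (x : V), η (g * h) x = η g (η h x) := fun g h x => by
    rw [map_mul]; rfl
  have hc1 : ∀ x : V, η (Sm * Tm⁻¹) (η Tm x) = η Sm x := fun x => by
    rw [← comp, inv_mul_cancel_right]
  have hc2 : ∀ x : V, η (Sm * Tm⁻¹) (η (Sm * Tm⁻¹) x) = η Tm (η Sm x) := fun x => by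
    rw [← comp, SL2Z_STinv_sq, comp]
  have key : ψ (z + 1) + ((z + 1) ^ (-2 * ν - 1)) • η Sm (ψ (-1 / (z + 1))) =
      η Tm (ψ z + (z ^ (-2 * ν - 1)) • η Sm (ψ (-1 / z))) := by
    rw [map_add, map_smul, L1, hsub, map_sub, map_smul, hc1, hc2, smul_sub, smul_smul,
      cpow_split hz (-2 * ν - 1)]
    abel
  have him1 : (z + 1).im = z.im := by simp
  rcases hz.lt_or_gt with hneg | hpos
  · rw [hdown (z + 1) (him1 ▸ hneg), hdown z hneg, map_smul, key]
  · rw [hup (z + 1) (him1 ▸ hpos), hup z hpos, map_smul, key]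
end
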